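/- Let 1 < p < 2, and let A = [[a1, s],[s, b1]] and B = [[a2, s],[s, b2]] be 2×2 positive definite real symmetric matrices with a1 ≥ a2 > 0, b1 ≥ b2 > 0, and s ≥ 0. Then (A^{p-1})_{12} ≤ (B^{p-1})_{12}. -/

import Mathlib

open scoped Matrix

/-- The real power `K^r` of a symmetric real matrix, via the spectral functional calculus. -/
noncomputable def matPow {n : Type*} [Fintype n] [DecidableEq n] {K : Matrix n n ℝ}
    (hK : K.IsHermitian) (r : ℝ) : Matrix n n ℝ :=
  (hK.eigenvectorUnitary : Matrix n n ℝ) *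
    Matrix.diagonal (fun i => hK.eigenvalues i ^ r) *
    star (hK.eigenvectorUnitary : Matrix n n ℝ)

open MeasureTheory Set Real

namespace OffdiagAux

/-! ### Analytic part -/

/-- The constant `∫_0^∞ t^(r-1)/(1+t) dt`. -/
noncomputable def c0 (r : ℝ) : ℝ := ∫ t in Ioi (0:ℝ), t ^ (r - 1) * (1 / (1 + t))

lemma contOn₁ {r x : ℝ} (hx : 0 < x) :
    ContinuousOn (fun t : ℝ => t ^ (r - 1) * (x / (x + t))) (Ioi 0) := by
  apply ContinuousOn.mul
  · intro t ht
    exact (Real.continuousAt_rpow_const t _ (Or.inl (ne_of_gt ht))).continuousWithinAt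
  · apply ContinuousOn.div continuousOn_const (continuousOn_const.add continuous_id.continuousOn)
    intro t ht
    show x + t ≠ 0
    have := mem_Ioi.mp ht
    positivity

lemma integrableOn_aux {r x : ℝ} (hr0 : 0 < r) (hr1 : r < 1) (hx : 0 < x) :
    IntegrableOn (fun t : ℝ => t ^ (r - 1) * (x / (x + t))) (Ioi 0) := by
  have hmeas : AEStronglyMeasurable (fun t : ℝ => t ^ (r - 1) * (x / (x + t)))
      (volume.restrict (Ioi (0:ℝ))) :=
    (contOn₁ hx).aestronglyMeasurable measurableSet_Ioi
  have hsplit : Ioi (0:ℝ) = Ioc (0:ℝ) 1 ∪ Ioi 1 := (Ioc_union_Ioi_eq_Ioi zero_le_one).symm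
  rw [hsplit]
  apply IntegrableOn.union
  · -- on (0,1], dominated by t ^ (r-1)
    have h1 : IntegrableOn (fun t : ℝ => t ^ (r - 1)) (Ioc (0:ℝ) 1) := by
      have := intervalIntegral.intervalIntegrable_rpow' (a := 0) (b := 1) (r := r - 1)
        (by linarith)
      rwa [intervalIntegrable_iff_integrableOn_Ioc_of_le zero_le_one] at this
    apply Integrable.mono h1 (hmeas.mono_set (by rw [hsplit]; exact subset_union_left))
    filter_upwards [ae_restrict_mem measurableSet_Ioc] with t ht
    rw [norm_mul]
    have ht0 : 0 < t := ht.1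
    have h2 : ‖x / (x + t)‖ ≤ 1 := by
      rw [norm_div, Real.norm_of_nonneg hx.le, Real.norm_of_nonneg (by linarith)]
      rw [div_le_one (by linarith)]; linarith
    calc ‖t ^ (r - 1)‖ * ‖x / (x + t)‖ ≤ ‖t ^ (r - 1)‖ * 1 :=
          mul_le_mul_of_nonneg_left h2 (norm_nonneg _)
      _ = ‖t ^ (r - 1)‖ := mul_one _
  · -- on (1,∞), dominated by x * t ^ (r-2)
    have h1 : IntegrableOn (fun t : ℝ => x * t ^ (r - 2)) (Ioi (1:ℝ)) :=
      (integrableOn_Ioi_rpow_of_lt (by linarith) one_pos).const_mul x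
    apply Integrable.mono h1 (hmeas.mono_set (by rw [hsplit]; exact subset_union_right))
    filter_upwards [ae_restrict_mem measurableSet_Ioi] with t ht
    have ht1 : (1:ℝ) < t := ht
    have ht0 : (0:ℝ) < t := by linarith
    rw [norm_mul, Real.norm_of_nonneg (Real.rpow_nonneg ht0.le _),
      Real.norm_of_nonneg (div_nonneg hx.le (by linarith)),
      Real.norm_of_nonneg (mul_nonneg hx.le (Real.rpow_nonneg ht0.le _))]
    have : t ^ (r - 2) = t ^ (r - 1) * t⁻¹ := by
      rw [← Real.rpow_neg_one t, ← Real.rpow_add ht0]; ring_nf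
    rw [this]
    have hxt : x / (x + t) ≤ x * t⁻¹ := by
      rw [← div_eq_mul_inv]
      gcongr
      linarith
    calc t ^ (r - 1) * (x / (x + t)) ≤ t ^ (r - 1) * (x * t⁻¹) :=
          mul_le_mul_of_nonneg_left hxt (Real.rpow_nonneg ht0.le _)
      _ = x * (t ^ (r - 1) * t⁻¹) := by ring

lemma integral_aux {r x : ℝ} (hr0 : 0 < r) (hr1 : r < 1) (hx : 0 < x) :
    ∫ t in Ioi (0:ℝ), t ^ (r - 1) * (x / (x + t)) = x ^ r * c0 r := by
  have key := MeasureTheory.integral_comp_mul_left_Ioi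
    (g := fun t : ℝ => t ^ (r - 1) * (x / (x + t))) (a := 0) (b := x) hx
  rw [mul_zero] at key
  have congr1 : ∫ u in Ioi (0:ℝ), (fun t : ℝ => t ^ (r - 1) * (x / (x + t))) (x * u)
      = ∫ u in Ioi (0:ℝ), x ^ (r - 1) * (u ^ (r - 1) * (1 / (1 + u))) := by
    apply setIntegral_congr_fun measurableSet_Ioi
    intro u hu
    have hu0 : 0 < u := hu
    simp only
    rw [Real.mul_rpow hx.le hu0.le]
    have : x / (x + x * u) = 1 / (1 + u) := by
      rw [div_eq_div_iff (by nlinarith) (by nlinarith)]; ring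
    rw [this]; ring
  rw [congr1, integral_const_mul] at key
  have hc : c0 r = ∫ u in Ioi (0:ℝ), u ^ (r - 1) * (1 / (1 + u)) := rfl
  rw [← hc] at key
  have key2 : x ^ (r - 1) * c0 r
      = x⁻¹ * ∫ t in Ioi (0:ℝ), t ^ (r - 1) * (x / (x + t)) := by simpa using key
  have h3 : ∫ t in Ioi (0:ℝ), t ^ (r - 1) * (x / (x + t)) = x * (x ^ (r - 1) * c0 r) := by
    rw [key2, ← mul_assoc, mul_inv_cancel₀ (ne_of_gt hx), one_mul]
  rw [h3, ← mul_assoc]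
  congr 1
  rw [Real.rpow_sub hx, Real.rpow_one]
  field_simp

lemma c0_pos {r : ℝ} (hr0 : 0 < r) (hr1 : r < 1) : 0 < c0 r := by
  rw [c0]
  rw [setIntegral_pos_iff_support_of_nonneg_ae]
  · have hsub : Ioi (0:ℝ) ⊆ (Function.support fun t : ℝ => t ^ (r - 1) * (1 / (1 + t))) ∩
        Ioi 0 := by
      intro t ht
      have ht0 : (0:ℝ) < t := ht
      refine ⟨?_, ht⟩
      rw [Function.mem_support]
      positivity
    calc (0:ENNReal) < volume (Ioi (0:ℝ)) := by simp [volume_Ioi]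
      _ ≤ volume _ := measure_mono hsub
  · filter_upwards [ae_restrict_mem measurableSet_Ioi] with t ht
    have ht0 : (0:ℝ) < t := ht
    positivity
  · simpa using integrableOn_aux hr0 hr1 one_pos

lemma contOn₂ {r x y : ℝ} (hx : 0 < x) (hy : 0 < y) :
    ContinuousOn (fun t : ℝ => t ^ r / ((x + t) * (y + t))) (Ioi 0) := by
  apply ContinuousOn.div
  · intro t ht
    exact (Real.continuousAt_rpow_const t _ (Or.inl (ne_of_gt ht))).continuousWithinAt
  · exact ((continuousOn_const.add continuousOn_id).mul
      (continuousOn_const.add continuousOn_id))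
  · intro t ht
    have ht0 : (0:ℝ) < t := ht
    positivity

lemma integrableOn_aux₂ {r x y : ℝ} (hr0 : 0 < r) (hr1 : r < 1) (hx : 0 < x) (hy : 0 < y) :
    IntegrableOn (fun t : ℝ => t ^ r / ((x + t) * (y + t))) (Ioi 0) := by
  have hmeas : AEStronglyMeasurable (fun t : ℝ => t ^ r / ((x + t) * (y + t)))
      (volume.restrict (Ioi (0:ℝ))) :=
    (contOn₂ hx hy).aestronglyMeasurable measurableSet_Ioi
  have hsplit : Ioi (0:ℝ) = Ioc (0:ℝ) 1 ∪ Ioi 1 := (Ioc_union_Ioi_eq_Ioi zero_le_one).symm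
  rw [hsplit]
  apply IntegrableOn.union
  · -- bounded by 1/(x*y) on (0,1]
    have h1 : IntegrableOn (fun _ : ℝ => 1 / (x * y)) (Ioc (0:ℝ) 1) :=
      integrableOn_const (by simp)
    apply Integrable.mono h1 (hmeas.mono_set (by rw [hsplit]; exact subset_union_left))
    filter_upwards [ae_restrict_mem measurableSet_Ioc] with t ht
    have ht0 : (0:ℝ) < t := ht.1
    have ht1 : t ≤ 1 := ht.2
    rw [Real.norm_of_nonneg (by positivity), Real.norm_of_nonneg (by positivity)]
    apply div_le_div₀ (by positivity) _ (by positivity) _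
    · calc t ^ r ≤ 1 ^ r := Real.rpow_le_rpow ht0.le ht1 hr0.le
        _ = 1 := Real.one_rpow r
    · nlinarith
  · -- bounded by t^(r-2) on (1,∞)
    have h1 : IntegrableOn (fun t : ℝ => t ^ (r - 2)) (Ioi (1:ℝ)) :=
      integrableOn_Ioi_rpow_of_lt (by linarith) one_pos
    apply Integrable.mono h1 (hmeas.mono_set (by rw [hsplit]; exact subset_union_right))
    filter_upwards [ae_restrict_mem measurableSet_Ioi] with t ht
    have ht1 : (1:ℝ) < t := ht
    have ht0 : (0:ℝ) < t := by linarith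
    rw [Real.norm_of_nonneg (by positivity),
      Real.norm_of_nonneg (Real.rpow_nonneg ht0.le _)]
    have h2 : t ^ (r - 2) = t ^ r / (t * t) := by
      rw [eq_div_iff (by positivity), ← mul_assoc, ← Real.rpow_add_one (ne_of_gt ht0),
        ← Real.rpow_add_one (ne_of_gt ht0)]
      ring_nf
    rw [h2]
    apply div_le_div₀ (Real.rpow_nonneg ht0.le _) le_rfl (by positivity)
    nlinarith

/-- The key integral identity:
`(x^r - y^r) * c0 r = (x - y) * ∫_0^∞ t^r / ((x+t)(y+t)) dt`. -/
lemma key_identity {r x y : ℝ} (hr0 : 0 < r) (hr1 : r < 1) (hx : 0 < x) (hy : 0 < y) :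
    (x ^ r - y ^ r) * c0 r
      = (x - y) * ∫ t in Ioi (0:ℝ), t ^ r / ((x + t) * (y + t)) := by
  have hix := integrableOn_aux hr0 hr1 hx
  have hiy := integrableOn_aux hr0 hr1 hy
  have h1 : (x ^ r - y ^ r) * c0 r
      = ∫ t in Ioi (0:ℝ), (t ^ (r - 1) * (x / (x + t)) - t ^ (r - 1) * (y / (y + t))) := by
    rw [integral_sub hix hiy, integral_aux hr0 hr1 hx, integral_aux hr0 hr1 hy]
    ring
  rw [h1, ← integral_const_mul]
  apply setIntegral_congr_fun measurableSet_Ioi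
  intro t ht
  have ht0 : (0:ℝ) < t := ht
  have hxt : (0:ℝ) < x + t := by linarith
  have hyt : (0:ℝ) < y + t := by linarith
  have htr : t ^ (r - 1) * t = t ^ r := by
    rw [← Real.rpow_add_one (ne_of_gt ht0)]
    norm_num
  have hdiff : x / (x + t) - y / (y + t) = t * (x - y) / ((x + t) * (y + t)) := by
    field_simp; ring
  simp only
  rw [← mul_sub, hdiff,
    show t ^ (r - 1) * (t * (x - y) / ((x + t) * (y + t)))
      = (x - y) * (t ^ (r - 1) * t / ((x + t) * (y + t))) by ring, htr]

lemma integral_mono_aux {r x y x' y' : ℝ} (hr0 : 0 < r) (hr1 : r < 1)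
    (hx : 0 < x) (hy : 0 < y) (hx' : 0 < x') (hy' : 0 < y')
    (hsum : x' + y' ≤ x + y) (hprod : x' * y' ≤ x * y) :
    (∫ t in Ioi (0:ℝ), t ^ r / ((x + t) * (y + t)))
      ≤ ∫ t in Ioi (0:ℝ), t ^ r / ((x' + t) * (y' + t)) := by
  apply setIntegral_mono_on (integrableOn_aux₂ hr0 hr1 hx hy)
    (integrableOn_aux₂ hr0 hr1 hx' hy') measurableSet_Ioi
  intro t ht
  have ht0 : (0:ℝ) < t := ht
  apply div_le_div_of_nonneg_left (Real.rpow_nonneg ht0.le r) (by positivity) (by nlinarith)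

/-! ### Matrix part -/

lemma trace_eq_sum_eigenvalues {n : Type*} [Fintype n] [DecidableEq n] {K : Matrix n n ℝ}
    (hK : K.IsHermitian) : ∑ i, hK.eigenvalues i = K.trace := by
  calc ∑ i, hK.eigenvalues i
      = (Matrix.diagonal (RCLike.ofReal ∘ hK.eigenvalues) : Matrix n n ℝ).trace := by
        simp [Matrix.trace_diagonal, RCLike.ofReal_real_eq_id]
    _ = K.trace := by
        conv_rhs => rw [hK.spectral_theorem]
        rw [Unitary.conjStarAlgAut_apply, Matrix.trace_mul_cycle,
          (Matrix.mem_unitaryGroup_iff').mp hK.eigenvectorUnitary.2, Matrix.one_mul]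

lemma matPow_eq {n : Type*} [Fintype n] [DecidableEq n] {K : Matrix n n ℝ}
    (hK : K.IsHermitian) (r α β : ℝ)
    (h : ∀ i, hK.eigenvalues i ^ r = α + β * hK.eigenvalues i) :
    matPow hK r = α • (1 : Matrix n n ℝ) + β • K := by
  have hdiag : (Matrix.diagonal fun i => hK.eigenvalues i ^ r)
      = α • (1 : Matrix n n ℝ) + β • Matrix.diagonal (RCLike.ofReal ∘ hK.eigenvalues) := by
    ext i j
    rcases eq_or_ne i j with rfl | hij
    · simp [Matrix.one_apply_eq, h i, RCLike.ofReal_real_eq_id]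
    · simp [Matrix.diagonal_apply_ne _ hij, Matrix.one_apply_ne hij]
  rw [matPow, hdiag, Matrix.mul_add, Matrix.add_mul]
  rw [mul_smul_comm, smul_mul_assoc, mul_one,
    (Matrix.mem_unitaryGroup_iff).mp hK.eigenvectorUnitary.2]
  rw [mul_smul_comm, smul_mul_assoc]
  conv_rhs => rw [hK.spectral_theorem, Unitary.conjStarAlgAut_apply]

/-- Divided difference of `x ↦ x ^ r`. -/
noncomputable def dd (r x y : ℝ) : ℝ := if x = y then 0 else (x ^ r - y ^ r) / (x - y)

lemma interp (r x y : ℝ) :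
    x ^ r = (x ^ r - dd r x y * x) + dd r x y * x ∧
    y ^ r = (x ^ r - dd r x y * x) + dd r x y * y := by
  constructor
  · ring
  · by_cases h : x = y
    · simp [dd, h]
    · have hne : x - y ≠ 0 := sub_ne_zero.mpr h
      rw [dd, if_neg h]
      field_simp
      ring

lemma entry_formula {a b s : ℝ} (h : (!![a, s; s, b]).PosDef) (r : ℝ) :
    matPow h.1 r 0 1 = dd r (h.1.eigenvalues 0) (h.1.eigenvalues 1) * s := by
  set x := h.1.eigenvalues 0
  set y := h.1.eigenvalues 1
  set β := dd r x y with hβ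
  set α := x ^ r - β * x with hα
  have hinterp := interp r x y
  have hall : ∀ i, h.1.eigenvalues i ^ r = α + β * h.1.eigenvalues i := by
    intro i
    fin_cases i
    · exact hinterp.1
    · exact hinterp.2
  rw [matPow_eq h.1 r α β hall]
  simp [Matrix.add_apply, Matrix.smul_apply, Matrix.one_apply_ne (show (0:Fin 2) ≠ 1 by decide)]

lemma eigen_sum {a b s : ℝ} (h : (!![a, s; s, b]).PosDef) :
    h.1.eigenvalues 0 + h.1.eigenvalues 1 = a + b := by
  have := trace_eq_sum_eigenvalues h.1
  rwa [Fin.sum_univ_two, Matrix.trace_fin_two_of] at this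

lemma eigen_prod {a b s : ℝ} (h : (!![a, s; s, b]).PosDef) :
    h.1.eigenvalues 0 * h.1.eigenvalues 1 = a * b - s * s := by
  have := h.1.det_eq_prod_eigenvalues
  rw [Fin.prod_univ_two, Matrix.det_fin_two_of] at this
  exact_mod_cast this.symm

end OffdiagAux

theorem offdiag_power_monotone (p : ℝ) (hp1 : 1 < p) (hp2 : p < 2)
    (a1 a2 b1 b2 s : ℝ) (ha : a1 ≥ a2) (ha2 : a2 > 0) (hb : b1 ≥ b2) (hb2 : b2 > 0)
    (hs : s ≥ 0)
    (hA : (!![a1, s; s, b1]).PosDef) (hB : (!![a2, s; s, b2]).PosDef) :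
    matPow hA.1 (p - 1) 0 1 ≤ matPow hB.1 (p - 1) 0 1 := by
  set r := p - 1 with hrdef
  have hr0 : 0 < r := by simp [hrdef]; linarith
  have hr1 : r < 1 := by simp [hrdef]; linarith
  rw [OffdiagAux.entry_formula hA r, OffdiagAux.entry_formula hB r]
  rcases eq_or_lt_of_le hs with hs0 | hs0
  · have h1 : ∀ c : ℝ, c * s = 0 := fun c => by rw [← hs0, mul_zero]
    rw [h1, h1]
  -- s > 0 : eigenvalues are distinct
  set x := hA.1.eigenvalues 0 with hxd
  set y := hA.1.eigenvalues 1 with hyd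
  set x' := hB.1.eigenvalues 0 with hxd'
  set y' := hB.1.eigenvalues 1 with hyd'
  have hx : 0 < x := hA.eigenvalues_pos 0
  have hy : 0 < y := hA.eigenvalues_pos 1
  have hx' : 0 < x' := hB.eigenvalues_pos 0
  have hy' : 0 < y' := hB.eigenvalues_pos 1
  have hsA : x + y = a1 + b1 := OffdiagAux.eigen_sum hA
  have hpA : x * y = a1 * b1 - s * s := OffdiagAux.eigen_prod hA
  have hsB : x' + y' = a2 + b2 := OffdiagAux.eigen_sum hB
  have hpB : x' * y' = a2 * b2 - s * s := OffdiagAux.eigen_prod hB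
  clear_value x y x' y'
  have hxyne : x ≠ y := by
    intro hcon
    have : (x - y) ^ 2 = (a1 - b1) ^ 2 + 4 * (s * s) := by nlinarith
    nlinarith [sq_nonneg (a1 - b1)]
  have hxyne' : x' ≠ y' := by
    intro hcon
    have : (x' - y') ^ 2 = (a2 - b2) ^ 2 + 4 * (s * s) := by nlinarith
    nlinarith [sq_nonneg (a2 - b2)]
  have hc0 := OffdiagAux.c0_pos hr0 hr1
  have hkeyA := OffdiagAux.key_identity (x := x) (y := y) hr0 hr1 hx hy
  have hkeyB := OffdiagAux.key_identity (x := x') (y := y') hr0 hr1 hx' hy'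
  have hddA : OffdiagAux.dd r x y * OffdiagAux.c0 r
      = ∫ t in Set.Ioi (0:ℝ), t ^ r / ((x + t) * (y + t)) := by
    rw [OffdiagAux.dd, if_neg hxyne, div_mul_eq_mul_div, hkeyA, mul_comm (x - y),
      mul_div_cancel_right₀ _ (sub_ne_zero.mpr hxyne)]
  have hddB : OffdiagAux.dd r x' y' * OffdiagAux.c0 r
      = ∫ t in Set.Ioi (0:ℝ), t ^ r / ((x' + t) * (y' + t)) := by
    rw [OffdiagAux.dd, if_neg hxyne', div_mul_eq_mul_div, hkeyB, mul_comm (x' - y'),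
      mul_div_cancel_right₀ _ (sub_ne_zero.mpr hxyne')]
  have hab : a2 * b2 ≤ a1 * b1 := mul_le_mul ha hb hb2.le (le_trans ha2.le ha)
  have hsum : x' + y' ≤ x + y := by linarith [hsA, hsB]
  have hprod : x' * y' ≤ x * y := by linarith [hpA, hpB, hab]
  have hmono := OffdiagAux.integral_mono_aux hr0 hr1 hx hy hx' hy' hsum hprod
  have hdd : OffdiagAux.dd r x y ≤ OffdiagAux.dd r x' y' := by
    have := hddA.trans_le (hmono.trans_eq hddB.symm)
    exact le_of_mul_le_mul_right this hc0
  exact mul_le_mul_of_nonneg_right hdd hs
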